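/- Two-cell flow lower bound: let a₁, a₂ > 0, p ∈ [0,1], c ∈ (0,1], q > 0, r ∈ [0, min(q, c·a₂)), δ₁ ∈ (0,a₁], f₁ increasing on [0,δ₁] and non-increasing on [δ₁,a₁] with f₁(z) ≥ θ₁z, f₂(z) ≥ θ₂z (θ₁,θ₂ > 0) on the respective domains, and s = (1−d)·min(1, max(0, (min(q, c(a₂−x₂)) − u)/((1−p)f₁(x₁)))) + d·min(1, min(q, c(a₂−x₂))/((1−p)f₁(x₁))) with d ∈ [0,1], u ∈ [0,r]. Then there exists a constant C > 0, independent of (x₁,x₂,u,d), such that f₂(x₂) + (1+p)·s·f₁(x₁) ≥ C(2x₁ + x₂) for all x₁ ∈ (0,a₁], x₂ ∈ (0,a₂]. -/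

import Mathlib

open Set

theorem stmt_11 (a₁ a₂ p c q r δ₁ θ₁ θ₂ : ℝ) (f₁ f₂ : ℝ → ℝ)
    (ha₁ : 0 < a₁) (ha₂ : 0 < a₂) (hp : p ∈ Ico (0:ℝ) 1) (hc : c ∈ Ioc (0:ℝ) 1)
    (hq : 0 < q) (hr : r ∈ Ico 0 (min q (c * a₂)))
    (hδ₁ : δ₁ ∈ Ioc 0 a₁)
    (hinc : StrictMonoOn f₁ (Icc 0 δ₁))
    (hdec : AntitoneOn f₁ (Icc δ₁ a₁))
    (hθ₁ : 0 < θ₁) (hθ₂ : 0 < θ₂)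
    (hf₁ : ∀ z ∈ Icc 0 a₁, θ₁ * z ≤ f₁ z)
    (hf₂ : ∀ z ∈ Icc 0 a₂, θ₂ * z ≤ f₂ z) :
    ∃ C > 0, ∀ x₁ ∈ Ioc 0 a₁, ∀ x₂ ∈ Ioc 0 a₂, ∀ u ∈ Icc 0 r, ∀ d ∈ Icc (0:ℝ) 1,
      f₂ x₂ + (1 + p) *
        ((1 - d) * min 1 (max 0 ((min q (c * (a₂ - x₂)) - u) / ((1 - p) * f₁ x₁)))
          + d * min 1 (min q (c * (a₂ - x₂)) / ((1 - p) * f₁ x₁))) * f₁ x₁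
      ≥ C * (2 * x₁ + x₂) := by
  obtain ⟨hp0, hp1⟩ := hp
  obtain ⟨hc0, hc1⟩ := hc
  obtain ⟨hr0, hrlt⟩ := hr
  have hrq : r < q := lt_of_lt_of_le hrlt (min_le_left _ _)
  have hrca : r < c * a₂ := lt_of_lt_of_le hrlt (min_le_right _ _)
  set ε := a₂ - r / c with hε
  have hεpos : 0 < ε := by
    have : r / c < a₂ := (div_lt_iff₀ hc0).mpr (by linarith)
    simp only [hε]; linarith
  have hcε : c * ε = c * a₂ - r := by
    have := hc0.ne'; rw [hε, mul_sub, mul_div_assoc', mul_div_cancel_left₀ r this]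
  clear_value ε
  set m := min (q - r) (c * ε / 2) with hm
  clear_value m
  have hmpos : 0 < m := by rw [hm]; exact lt_min (by linarith) (by positivity)
  set C := min (min (θ₂/2) (θ₁/2)) (min (θ₂*ε/(8*a₁)) (m/(2*a₁))) with hCdef
  have hC1 : C ≤ θ₂/2 := le_trans (min_le_left _ _) (min_le_left _ _)
  have hC2 : C ≤ θ₁/2 := le_trans (min_le_left _ _) (min_le_right _ _)
  have hC3 : C ≤ θ₂*ε/(8*a₁) := le_trans (min_le_right _ _) (min_le_left _ _)
  have hC4 : C ≤ m/(2*a₁) := le_trans (min_le_right _ _) (min_le_right _ _)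
  have hCpos : 0 < C := by
    apply lt_min (lt_min (by positivity) (by positivity)) (lt_min (by positivity) (by positivity))
  clear_value C
  clear hCdef
  refine ⟨C, hCpos, ?_⟩
  intro x₁ hx₁ x₂ hx₂ u hu d hd
  have hFθ : θ₁ * x₁ ≤ f₁ x₁ := hf₁ x₁ ⟨hx₁.1.le, hx₁.2⟩
  have hFpos : 0 < f₁ x₁ := lt_of_lt_of_le (mul_pos hθ₁ hx₁.1) hFθ
  have hp' : 0 < 1 - p := by linarith
  have hden : 0 < (1 - p) * f₁ x₁ := mul_pos hp' hFpos
  have hf2x : θ₂ * x₂ ≤ f₂ x₂ := hf₂ x₂ ⟨hx₂.1.le, hx₂.2⟩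
  set M := min q (c * (a₂ - x₂)) with hM
  have hM0 : 0 ≤ M := le_min hq.le (mul_nonneg hc0.le (by linarith [hx₂.2]))
  set A := min 1 (max 0 ((M - u) / ((1 - p) * f₁ x₁))) with hA
  set B := min 1 (M / ((1 - p) * f₁ x₁)) with hB
  clear_value M A B
  have hA0 : 0 ≤ A := by rw [hA]; exact le_min zero_le_one (le_max_left 0 _)
  have hB0 : 0 ≤ B := by rw [hB]; exact le_min zero_le_one (div_nonneg hM0 hden.le)
  have hs0 : 0 ≤ (1 - d) * A + d * B :=
    add_nonneg (mul_nonneg (by linarith [hd.2]) hA0) (mul_nonneg hd.1 hB0)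
  rcases le_or_gt (ε/2) x₂ with hcase | hcase
  · -- x₂ large: f₂ term suffices
    have hnn : 0 ≤ (1 + p) * ((1 - d) * A + d * B) * f₁ x₁ :=
      mul_nonneg (mul_nonneg (by linarith) hs0) hFpos.le
    have h1 : C * (2 * x₁) ≤ θ₂ * ε / 4 := by
      have : C * (2 * x₁) ≤ (θ₂*ε/(8*a₁)) * (2 * a₁) := by
        apply mul_le_mul hC3 (by linarith [hx₁.2]) (by linarith [hx₁.1]) (by positivity)
      calc C * (2 * x₁) ≤ (θ₂*ε/(8*a₁)) * (2 * a₁) := this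
        _ = θ₂ * ε / 4 := by field_simp; ring
    have h2 : θ₂ * ε / 4 ≤ θ₂ * x₂ / 2 := by
      have := mul_le_mul_of_nonneg_left hcase hθ₂.le
      linarith
    have h3 : C * x₂ ≤ θ₂ / 2 * x₂ := mul_le_mul_of_nonneg_right hC1 hx₂.1.le
    linarith
  · -- x₂ small: flow term available
    have hMr : m ≤ M - r := by
      have h1 : m ≤ q - r := hm ▸ min_le_left _ _
      have h2 : m ≤ c * ε / 2 := hm ▸ min_le_right _ _
      have h3 : c * x₂ < c * (ε / 2) := by
        exact mul_lt_mul_of_pos_left hcase hc0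
      have h4 : m ≤ c * (a₂ - x₂) - r := by nlinarith
      simp only [hM]
      rcases le_total q (c * (a₂ - x₂)) with h | h
      · rw [min_eq_left h]; linarith
      · rw [min_eq_right h]; linarith
    rcases le_or_gt ((1 - p) * f₁ x₁) (M - r) with hle | hlt
    · -- saturated: A = B = 1
      have hur : u ≤ r := hu.2
      have hAeq : A = 1 := by
        rw [hA]
        apply min_eq_left
        refine le_trans ?_ (le_max_right 0 _)
        rw [le_div_iff₀ hden]
        linarith
      have hBeq : B = 1 := by
        rw [hB]
        apply min_eq_left
        rw [le_div_iff₀ hden]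
        linarith [hr0]
      rw [hAeq, hBeq]
      have hs1 : (1 - d) * 1 + d * 1 = 1 := by ring
      rw [hs1, mul_one]
      have h1 : C * (2 * x₁) ≤ (1 + p) * (θ₁ * x₁) := by
        have ha : C * (2 * x₁) ≤ θ₁ / 2 * (2 * x₁) :=
          mul_le_mul_of_nonneg_right hC2 (by linarith [hx₁.1.le])
        have hb : 0 ≤ p * (θ₁ * x₁) := mul_nonneg hp0 (mul_nonneg hθ₁.le hx₁.1.le)
        linarith
      have h2 : C * x₂ ≤ θ₂ * x₂ := by
        have := mul_le_mul_of_nonneg_right hC1 hx₂.1.le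
        have hb : 0 ≤ θ₂ / 2 * x₂ := mul_nonneg (by positivity) hx₂.1.le
        linarith
      have h3 : (1 + p) * (θ₁ * x₁) ≤ (1 + p) * f₁ x₁ :=
        mul_le_mul_of_nonneg_left hFθ (by linarith)
      linarith
    · -- unsaturated
      set t := (M - r) / ((1 - p) * f₁ x₁) with ht
      clear_value t
      have ht1 : t ≤ 1 := by
        rw [ht, div_le_one hden]; linarith
      have htA : t ≤ A := by
        rw [hA]
        apply le_min ht1
        refine le_trans ?_ (le_max_right 0 _)
        rw [ht]
        exact (div_le_div_iff_of_pos_right hden).mpr (by linarith [hu.2])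
      have htB : t ≤ B := by
        rw [hB]
        apply le_min ht1
        rw [ht]
        exact (div_le_div_iff_of_pos_right hden).mpr (by linarith [hr0])
      have hst : t ≤ (1 - d) * A + d * B := by
        have h1 := mul_le_mul_of_nonneg_left htA (by linarith [hd.2] : (0:ℝ) ≤ 1 - d)
        have h2 := mul_le_mul_of_nonneg_left htB hd.1
        linarith only [h1, h2]
      have htF : t * f₁ x₁ = (M - r) / (1 - p) := by
        rw [ht]; field_simp
      have hkey : m ≤ ((1 - d) * A + d * B) * f₁ x₁ := by
        have h1 : t * f₁ x₁ ≤ ((1 - d) * A + d * B) * f₁ x₁ :=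
          mul_le_mul_of_nonneg_right hst hFpos.le
        have h2 : m ≤ (M - r) / (1 - p) := by
          rw [le_div_iff₀ hp']
          have hb : 0 ≤ m * p := mul_nonneg hmpos.le hp0
          linarith
        linarith [htF ▸ h1, h2]
      have h1 : C * (2 * x₁) ≤ m := by
        have : C * (2 * x₁) ≤ (m/(2*a₁)) * (2 * a₁) := by
          apply mul_le_mul hC4 (by linarith [hx₁.2]) (by linarith [hx₁.1]) (by positivity)
        calc C * (2 * x₁) ≤ (m/(2*a₁)) * (2 * a₁) := this
          _ = m := by field_simp
      have h2 : C * x₂ ≤ θ₂ * x₂ := by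
        have := mul_le_mul_of_nonneg_right hC1 hx₂.1.le
        have hb : 0 ≤ θ₂ / 2 * x₂ := mul_nonneg (by positivity) hx₂.1.le
        linarith
      have h3 : m ≤ (1 + p) * (((1 - d) * A + d * B) * f₁ x₁) := by
        have hb : 0 ≤ p * (((1 - d) * A + d * B) * f₁ x₁) :=
          mul_nonneg hp0 (mul_nonneg hs0 hFpos.le)
        linarith
      linarith
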